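/- Let C ⊆ ℝⁿ be a compact semialgebraic convex set with 0 in its interior, and let C° = {ℓ ∈ ℝⁿ : ⟨ℓ, x⟩ ≥ −1 for all x ∈ C} be its polar. Let ℓ₀ be a regular real point of the algebraic boundary of C° lying on frontier C°, i.e. ℓ₀ ∈ frontier C° and there exists a polynomial p ∈ ℝ[x₁,…,xₙ] vanishing identically on frontier C° with ∇p(ℓ₀) ≠ 0. Then the face of C supported by ℓ₀ is a single point: the set {x ∈ C : ⟨ℓ₀, x⟩ = −1} is a singleton {x₀}, and x₀ is an extreme point of C (indeed an exposed point, exposed by ℓ₀). -/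

import Mathlib

open MvPolynomial

/-- A set is semialgebraic if it is a finite union of basic sets
`{x : p(x) = 0, q₁(x) > 0, …, q_m(x) > 0}`. -/
def IsSemialgebraic {n : ℕ} (S : Set (Fin n → ℝ)) : Prop :=
  ∃ (N : ℕ) (m : Fin N → ℕ)
    (p : Fin N → MvPolynomial (Fin n) ℝ)
    (q : (i : Fin N) → Fin (m i) → MvPolynomial (Fin n) ℝ),
    S = ⋃ i, {x | eval x (p i) = 0 ∧ ∀ j, 0 < eval x (q i j)}

/-- The vanishing ideal of a subset of ℝⁿ. -/
noncomputable def polyVanishingIdeal {n : ℕ} (T : Set (Fin n → ℝ)) : Ideal (MvPolynomial (Fin n) ℝ) where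
  carrier := {p | ∀ x ∈ T, eval x p = 0}
  add_mem' := by
    intro a b ha hb x hx
    simp [map_add, ha x hx, hb x hx]
  zero_mem' := by intro x hx; simp
  smul_mem' := by
    intro c p hp x hx
    simp [smul_eq_mul, hp x hx]

/-- The real zero set of an ideal of polynomials. -/
def realZeroSet {n : ℕ} (I : Ideal (MvPolynomial (Fin n) ℝ)) : Set (Fin n → ℝ) :=
  {x | ∀ p ∈ I, eval x p = 0}

/-- The gradient of a polynomial at a point. -/
noncomputable def grad {n : ℕ} (p : MvPolynomial (Fin n) ℝ) (z : Fin n → ℝ) : Fin n → ℝ :=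
  fun i => eval z (pderiv i p)

/-- The standard inner product on ℝⁿ. -/
def dot {n : ℕ} (a b : Fin n → ℝ) : ℝ := ∑ i, a i * b i

/-- The polar (dual convex body) of a set. -/
def polarBody {n : ℕ} (C : Set (Fin n → ℝ)) : Set (Fin n → ℝ) :=
  {ℓ | ∀ x ∈ C, -1 ≤ dot ℓ x}

/-- The dual cone of a set. -/
def dualCone {n : ℕ} (C : Set (Fin n → ℝ)) : Set (Fin n → ℝ) :=
  {ℓ | ∀ x ∈ C, 0 ≤ dot ℓ x}

/-- A pointed convex cone: convex, closed under nonnegative scaling, containing no line. -/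
def IsPointedCone {n : ℕ} (C : Set (Fin n → ℝ)) : Prop :=
  Convex ℝ C ∧ (∀ x ∈ C, ∀ t : ℝ, 0 ≤ t → t • x ∈ C) ∧ C ∩ (-C) = {0}

/-- A nonzero vector `v` spans an extreme ray of the cone `K` if whenever `y + z = v` with
`y, z ∈ K`, both `y` and `z` are nonnegative multiples of `v`. -/
def SpansExtremeRay {n : ℕ} (K : Set (Fin n → ℝ)) (v : Fin n → ℝ) : Prop :=
  v ≠ 0 ∧ v ∈ K ∧ ∀ y ∈ K, ∀ z ∈ K, y + z = v →
    (∃ t : ℝ, 0 ≤ t ∧ y = t • v) ∧ ∃ t : ℝ, 0 ≤ t ∧ z = t • v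

/-- The span of the gradients at `z` of the polynomials in `P`. -/
noncomputable def gradSpan {n : ℕ} (P : Ideal (MvPolynomial (Fin n) ℝ)) (z : Fin n → ℝ) :
    Submodule ℝ (Fin n → ℝ) :=
  Submodule.span ℝ {v | ∃ p ∈ P, v = grad p z}


section Aux

open ContinuousLinearMap

variable {n : ℕ}

lemma dot_add_left (a b x : Fin n → ℝ) : dot (a + b) x = dot a x + dot b x := by
  simp [dot, add_mul, Finset.sum_add_distrib]

lemma dot_add_right (a b x : Fin n → ℝ) : dot x (a + b) = dot x a + dot x b := by
  simp [dot, mul_add, Finset.sum_add_distrib]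

lemma dot_smul_left (t : ℝ) (a x : Fin n → ℝ) : dot (t • a) x = t * dot a x := by
  simp [dot, Finset.mul_sum, mul_assoc]

lemma dot_smul_right (t : ℝ) (a x : Fin n → ℝ) : dot x (t • a) = t * dot x a := by
  simp [dot, Finset.mul_sum]; congr 1; funext i; ring

lemma dot_comm (a b : Fin n → ℝ) : dot a b = dot b a := by
  simp [dot, mul_comm]

lemma dot_zero_left (x : Fin n → ℝ) : dot 0 x = 0 := by simp [dot]

lemma dot_zero_right (x : Fin n → ℝ) : dot x 0 = 0 := by simp [dot]

lemma dot_neg_right (a x : Fin n → ℝ) : dot x (-a) = -dot x a := by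
  simp [dot, Finset.sum_neg_distrib]

lemma dot_single_right (a : Fin n → ℝ) (i : Fin n) (t : ℝ) :
    dot a (Pi.single i t) = a i * t := by
  classical
  simp only [dot, Pi.single_apply]
  rw [Finset.sum_eq_single i] <;> simp (config := {contextual := true}) [eq_comm]

lemma dot_self_pos {g : Fin n → ℝ} (hg : g ≠ 0) : 0 < dot g g := by
  classical
  obtain ⟨i, hi⟩ := Function.ne_iff.mp hg
  refine Finset.sum_pos' (fun j _ => mul_self_nonneg _) ⟨i, Finset.mem_univ i, ?_⟩
  have : g i ≠ 0 := hi
  exact mul_self_pos.mpr this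

lemma abs_dot_le (a b : Fin n → ℝ) : |dot a b| ≤ n * ‖a‖ * ‖b‖ := by
  calc |dot a b| ≤ ∑ i, |a i * b i| := Finset.abs_sum_le_sum_abs _ _
    _ ≤ ∑ _i : Fin n, ‖a‖ * ‖b‖ := by
        refine Finset.sum_le_sum fun i _ => ?_
        rw [abs_mul]
        have h1 : |a i| ≤ ‖a‖ := norm_le_pi_norm a i
        have h2 : |b i| ≤ ‖b‖ := norm_le_pi_norm b i
        exact mul_le_mul h1 h2 (abs_nonneg _) (norm_nonneg _)
    _ = n * ‖a‖ * ‖b‖ := by simp [Finset.sum_const, mul_assoc]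

lemma continuous_dot_left (x : Fin n → ℝ) : Continuous fun ℓ : Fin n → ℝ => dot ℓ x := by
  unfold dot
  exact continuous_finset_sum _ fun i _ => (continuous_apply i).mul continuous_const

lemma isClosed_polarBody (C : Set (Fin n → ℝ)) : IsClosed (polarBody C) := by
  have : polarBody C = ⋂ x ∈ C, {ℓ : Fin n → ℝ | -1 ≤ dot ℓ x} := by
    ext ℓ; simp [polarBody]
  rw [this]
  exact isClosed_biInter fun x _ => isClosed_le continuous_const (continuous_dot_left x)

lemma convex_polarBody (C : Set (Fin n → ℝ)) : Convex ℝ (polarBody C) := by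
  intro ℓ₁ h₁ ℓ₂ h₂ a b ha hb hab x hx
  rw [dot_add_left, dot_smul_left, dot_smul_left]
  have e1 := h₁ x hx
  have e2 := h₂ x hx
  nlinarith

lemma hasFDerivAt_mvpoly (p : MvPolynomial (Fin n) ℝ) (z : Fin n → ℝ) :
    HasFDerivAt (fun x : Fin n → ℝ => eval x p)
      (∑ i, eval z (pderiv i p) • (ContinuousLinearMap.proj i : (Fin n → ℝ) →L[ℝ] ℝ)) z := by
  induction p using MvPolynomial.induction_on with
  | C a =>
      have h : (fun x : Fin n → ℝ => eval x (C a)) = fun _ => a := by funext x; simp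
      rw [h]
      simp only [pderiv_C, map_zero, zero_smul, Finset.sum_const_zero]
      exact hasFDerivAt_const a z
  | add p q hp hq =>
      have h := hp.fun_add hq
      have e1 : (fun x : Fin n → ℝ => eval x p + eval x q)
          = fun x : Fin n → ℝ => eval x (p + q) := by funext x; simp
      rw [e1] at h
      refine h.congr_fderiv ?_
      rw [← Finset.sum_add_distrib]
      congr 1; funext i
      simp [add_smul]
  | mul_X p j hp =>
      have hj : HasFDerivAt (fun x : Fin n → ℝ => x j)
          (ContinuousLinearMap.proj j : (Fin n → ℝ) →L[ℝ] ℝ) z := hasFDerivAt_apply j z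
      have h := hp.fun_mul hj
      have e1 : (fun x : Fin n → ℝ => eval x p * x j)
          = fun x : Fin n → ℝ => eval x (p * X j) := by funext x; simp
      rw [e1] at h
      refine h.congr_fderiv ?_
      ext v
      simp only [ContinuousLinearMap.sum_apply, ContinuousLinearMap.smul_apply,
        ContinuousLinearMap.proj_apply, ContinuousLinearMap.add_apply, smul_eq_mul,
        pderiv_mul, map_add, map_mul]
      classical
      have key : ∀ i : Fin n,
          ((eval z) ((pderiv i) p) * (eval z) (X j) + (eval z) p * (eval z) ((pderiv i) (X j)))
            * v i
          = z j * ((eval z) ((pderiv i) p) * v i)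
            + (if j = i then (eval z) p * v i else 0) := by
        intro i
        by_cases hij : j = i
        · subst hij; simp; ring
        · simp [Ne.symm hij, hij]; ring
      rw [Finset.sum_congr rfl fun i _ => key i, Finset.sum_add_distrib, ← Finset.mul_sum,
        Finset.sum_ite_eq]
      simp [add_comm]

end Aux
set_option maxHeartbeats 1600000 in
open ContinuousLinearMap Filter Asymptotics in
/-- A regular real point of the algebraic boundary of the polar supports a
face of `C` which is a single (extreme, exposed) point. -/
theorem face_of_regular_point_is_exposed_extreme_point {n : ℕ} (C : Set (Fin n → ℝ))
    (hcomp : IsCompact C) (hsa : IsSemialgebraic C) (hconv : Convex ℝ C)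
    (h0 : (0 : Fin n → ℝ) ∈ interior C)
    (l0 : Fin n → ℝ) (hl0 : l0 ∈ frontier (polarBody C))
    (hreg : ∃ p : MvPolynomial (Fin n) ℝ,
      (∀ l ∈ frontier (polarBody C), MvPolynomial.eval l p = 0) ∧ grad p l0 ≠ 0) :
    ∃ x₀ : Fin n → ℝ, {x | x ∈ C ∧ dot l0 x = -1} = {x₀} ∧
      x₀ ∈ Set.extremePoints ℝ C := by
  classical
  obtain ⟨p, hp0, hg⟩ := hreg
  set D : Set (Fin n → ℝ) := polarBody C with hDdef
  set g : Fin n → ℝ := grad p l0 with hgdef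
  have hDclosed : IsClosed D := isClosed_polarBody C
  have hDconv : Convex ℝ D := convex_polarBody C
  have hl0cl : l0 ∈ closure D := frontier_subset_closure hl0
  have hl0D : l0 ∈ D := hDclosed.closure_eq ▸ hl0cl
  have hl0ni : l0 ∉ interior D := hl0.2
  have hC0 : (0 : Fin n → ℝ) ∈ C := interior_subset h0
  -- C is bounded
  obtain ⟨R, hR⟩ : ∃ R, ∀ x ∈ C, ‖x‖ ≤ R := isBounded_iff_forall_norm_le.mp hcomp.isBounded
  have hR0 : 0 ≤ R := le_trans (norm_nonneg _) (hR 0 hC0)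
  -- 0 is in the interior of D
  have hball0 : ∀ ℓ : Fin n → ℝ, ‖ℓ‖ < (n * R + 1)⁻¹ → ℓ ∈ D := by
    intro ℓ hℓ x hx
    have h1 : |dot ℓ x| ≤ n * ‖ℓ‖ * ‖x‖ := abs_dot_le ℓ x
    have h2 : ‖x‖ ≤ R := hR x hx
    have h3 : (0:ℝ) < n * R + 1 := by positivity
    have h4 : ‖ℓ‖ * (n * R + 1) < 1 := by
      have h := hℓ
      rw [← one_div] at h
      exact (lt_div_iff₀ h3).mp h
    have h5 := abs_le.mp h1
    have hn0 : (0:ℝ) ≤ n := Nat.cast_nonneg n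
    nlinarith [mul_le_mul_of_nonneg_left h2 (mul_nonneg hn0 (norm_nonneg ℓ)),
      norm_nonneg ℓ, norm_nonneg x, h5.1]
  have h0D : (0 : Fin n → ℝ) ∈ interior D := by
    rw [mem_interior]
    refine ⟨Metric.ball 0 (n * R + 1)⁻¹, fun ℓ hℓ => hball0 ℓ (by simpa [dist_zero_right] using hℓ),
      Metric.isOpen_ball, Metric.mem_ball_self (by positivity)⟩
  -- Step 1 : the face is nonempty
  obtain ⟨xb, hxbC, hxbmin⟩ :=
    hcomp.exists_isMinOn ⟨0, hC0⟩ ((continuous_dot_left _).comp continuous_id).continuousOn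
  have hxbmin' : ∀ x ∈ C, dot xb l0 ≤ dot x l0 := fun x hx => hxbmin hx
  have hxb1 : dot l0 xb = -1 := by
    have hge : -1 ≤ dot l0 xb := hl0D xb hxbC
    rcases eq_or_lt_of_le hge with h | hgt
    · exact h.symm
    · exfalso
      apply hl0ni
      rw [mem_interior]
      set m := dot l0 xb with hm
      have hm1 : 0 < m + 1 := by linarith
      have h3 : (0:ℝ) < n * R + 1 := by positivity
      refine ⟨Metric.ball l0 ((m+1) / (n * R + 1)), fun ℓ hℓ => ?_, Metric.isOpen_ball,
        Metric.mem_ball_self (by positivity)⟩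
      intro x hx
      have h2 : dot ℓ x = dot l0 x + dot (ℓ - l0) x := by
        rw [← dot_add_left]; congr 1; abel
      have h4 : |dot (ℓ - l0) x| ≤ n * ‖ℓ - l0‖ * ‖x‖ := abs_dot_le _ _
      have h5 : ‖ℓ - l0‖ * (n * R + 1) < m + 1 := by
        rw [← lt_div_iff₀ h3]
        simpa [dist_eq_norm] using hℓ
      have h6 : m ≤ dot l0 x := by
        have h := hxbmin' x hx
        calc m = dot xb l0 := dot_comm l0 xb
          _ ≤ dot x l0 := h
          _ = dot l0 x := dot_comm x l0
      have h7 := abs_le.mp h4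
      have h8 : ‖x‖ ≤ R := hR x hx
      have hn0 : (0:ℝ) ≤ n := Nat.cast_nonneg n
      rw [h2]
      nlinarith [mul_le_mul_of_nonneg_left h8 (mul_nonneg hn0 (norm_nonneg (ℓ - l0))),
        norm_nonneg (ℓ - l0), norm_nonneg x, h7.1]
  -- choice of the direction e
  obtain ⟨r0, hr0pos, hr0⟩ : ∃ r > 0, Metric.ball (0 : Fin n → ℝ) r ⊆ interior D :=
    Metric.mem_nhds_iff.mp (isOpen_interior.mem_nhds h0D)
  obtain ⟨e, heInt, hbne⟩ : ∃ e : Fin n → ℝ, l0 + e ∈ interior D ∧ dot g e ≠ 0 := by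
    by_cases hc : dot g l0 = 0
    · set c : ℝ := r0 / (2 * (‖g‖ + 1)) with hcdef
      have hcpos : 0 < c := by positivity
      refine ⟨-l0 + c • g, ?_, ?_⟩
      · have h1 : l0 + (-l0 + c • g) = c • g := by abel
        rw [h1]
        apply hr0
        rw [Metric.mem_ball, dist_zero_right, norm_smul, Real.norm_eq_abs, abs_of_pos hcpos]
        have hgn : ‖g‖ < ‖g‖ + 1 := by linarith
        calc c * ‖g‖ ≤ c * (‖g‖ + 1) := by nlinarith [norm_nonneg g]
          _ = r0 / 2 := by rw [hcdef]; field_simp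
          _ < r0 := by linarith
      · rw [dot_add_right, dot_neg_right, hc, dot_smul_right, neg_zero, zero_add]
        exact mul_ne_zero (ne_of_gt hcpos) (ne_of_gt (dot_self_pos hg))
    · refine ⟨-l0, by simpa using h0D, ?_⟩
      rw [dot_neg_right]
      exact neg_ne_zero.mpr hc
  set b : ℝ := dot g e with hbdef
  have habs : 0 < |b| := abs_pos.mpr hbne
  have he0 : e ≠ 0 := by
    intro h
    apply hbne
    rw [hbdef, h, dot_zero_right]
  have hene : 0 < ‖e‖ := norm_pos_iff.mpr he0
  -- D is bounded
  obtain ⟨ρ, hρpos, hρ⟩ : ∃ r > 0, Metric.ball (0 : Fin n → ℝ) r ⊆ C :=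
    Metric.mem_nhds_iff.mp (mem_interior_iff_mem_nhds.mp h0)
  have hDbdd : ∀ ℓ ∈ D, ‖ℓ‖ ≤ 2 / ρ := by
    intro ℓ hℓ
    rw [pi_norm_le_iff_of_nonneg (by positivity)]
    intro i
    have hsingle : ∀ t : ℝ, |t| < ρ → (Pi.single i t : Fin n → ℝ) ∈ C := by
      intro t ht
      apply hρ
      rw [Metric.mem_ball, dist_zero_right]
      have hn : ‖(Pi.single i t : Fin n → ℝ)‖ ≤ |t| := by
        rw [pi_norm_le_iff_of_nonneg (abs_nonneg t)]
        intro j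
        rcases eq_or_ne j i with rfl | hji
        · simp
        · simp [Pi.single_apply, hji, abs_nonneg]
      exact lt_of_le_of_lt hn ht
    have habs1 : |ρ/2| < ρ := by rw [abs_of_pos (by positivity)]; linarith
    have habs2 : |(-(ρ/2))| < ρ := by rw [abs_neg, abs_of_pos (by positivity)]; linarith
    have h1 : -1 ≤ dot ℓ (Pi.single i (ρ/2)) := hℓ _ (hsingle _ habs1)
    have h2 : -1 ≤ dot ℓ (Pi.single i (-(ρ/2))) := hℓ _ (hsingle _ habs2)
    rw [dot_single_right] at h1 h2
    have key1 : ℓ i * ρ ≤ 2 := by nlinarith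
    have key2 : -2 ≤ ℓ i * ρ := by nlinarith
    rw [Real.norm_eq_abs, abs_le]
    constructor
    · rw [neg_le, ← neg_mul] at *
      rw [le_div_iff₀ hρpos]
      nlinarith
    · rw [le_div_iff₀ hρpos]
      nlinarith
  set Ml : ℝ := 2 / ρ with hMl
  -- the section map
  set A : (Fin n → ℝ) → ℝ → (Fin n → ℝ) := fun y t => l0 + y + t • e with hA
  set S : (Fin n → ℝ) → Set ℝ := fun y => {t | A y t ∈ D} with hSdef
  obtain ⟨δ₁, hδ₁pos, hδ₁⟩ : ∃ δ > 0, Metric.ball (l0 + e) δ ⊆ D :=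
    Metric.mem_nhds_iff.mp (mem_of_superset (isOpen_interior.mem_nhds heInt) interior_subset)
  have hSne : ∀ y : Fin n → ℝ, ‖y‖ < δ₁ → (1:ℝ) ∈ S y := by
    intro y hy
    show A y 1 ∈ D
    apply hδ₁
    rw [Metric.mem_ball, dist_eq_norm]
    have h : A y 1 - (l0 + e) = y := by simp only [hA]; module
    rw [h]; exact hy
  set M : ℝ := max 1 ((Ml + ‖l0‖ + δ₁) / ‖e‖) with hM
  have hM1 : (1:ℝ) ≤ M := le_max_left _ _
  have hSlb : ∀ y : Fin n → ℝ, ‖y‖ ≤ δ₁ → ∀ t ∈ S y, -M ≤ t := by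
    intro y hy t ht
    have h1 : ‖A y t‖ ≤ Ml := hDbdd _ ht
    have h2 : t • e = A y t - l0 - y := by simp only [hA]; module
    have h3 : ‖t • e‖ ≤ Ml + ‖l0‖ + δ₁ := by
      rw [h2]
      calc ‖A y t - l0 - y‖ ≤ ‖A y t - l0‖ + ‖y‖ := norm_sub_le _ _
        _ ≤ ‖A y t‖ + ‖l0‖ + ‖y‖ := by linarith [norm_sub_le (A y t) l0]
        _ ≤ Ml + ‖l0‖ + δ₁ := by linarith
    rw [norm_smul, Real.norm_eq_abs] at h3
    have h4 : |t| ≤ (Ml + ‖l0‖ + δ₁) / ‖e‖ := by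
      rw [le_div_iff₀ hene]; linarith
    have h5 : |t| ≤ M := le_trans h4 (le_max_right _ _)
    linarith [neg_abs_le t]
  have hbddS : ∀ y : Fin n → ℝ, ‖y‖ ≤ δ₁ → BddBelow (S y) :=
    fun y hy => ⟨-M, fun t ht => hSlb y hy t ht⟩
  have hSclosed : ∀ y : Fin n → ℝ, IsClosed (S y) := by
    intro y
    have : Continuous fun t : ℝ => A y t := by
      rw [hA]; exact continuous_const.add (continuous_id.smul continuous_const)
    exact hDclosed.preimage this
  set f : (Fin n → ℝ) → ℝ := fun y => sInf (S y) with hf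
  have hfmem : ∀ y : Fin n → ℝ, ‖y‖ < δ₁ → f y ∈ S y := fun y hy =>
    (hSclosed y).csInf_mem ⟨1, hSne y hy⟩ (hbddS y hy.le)
  have hfgeM : ∀ y : Fin n → ℝ, ‖y‖ < δ₁ → -M ≤ f y := fun y hy =>
    hSlb y hy.le _ (hfmem y hy)
  -- no boundary point strictly inside along -e
  have hneg : ∀ t : ℝ, t < 0 → l0 + t • e ∉ D := by
    intro t ht hmem
    have h1t : (0:ℝ) < 1 - t := by linarith
    have key : (-t/(1-t)) • (l0 + e) + (1/(1-t)) • (l0 + t • e) = l0 := by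
      match_scalars <;> (field_simp; try ring)
    have ha : 0 < -t/(1-t) := div_pos (by linarith) h1t
    have hb' : (0:ℝ) ≤ 1/(1-t) := by positivity
    have hab : -t/(1-t) + 1/(1-t) = 1 := by field_simp; try ring
    have hcombo := hDconv.combo_interior_closure_mem_interior (a := -t/(1-t)) (b := 1/(1-t))
      heInt (subset_closure hmem) ha hb' hab
    rw [key] at hcombo
    exact hl0ni hcombo
  have hf0 : f 0 = 0 := by
    have h0S : (0:ℝ) ∈ S 0 := by
      show A 0 0 ∈ D
      have h : A 0 0 = l0 := by simp only [hA]; module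
      rw [h]; exact hl0D
    apply le_antisymm (csInf_le (hbddS 0 (by rw [norm_zero]; exact hδ₁pos.le)) h0S)
    apply le_csInf ⟨0, h0S⟩
    intro t ht
    by_contra h
    push_neg at h
    apply hneg t h
    have he : A 0 t = l0 + t • e := by simp only [hA]; module
    rw [← he]; exact ht
  -- continuity of f at 0
  have hfcont : Tendsto f (nhds 0) (nhds 0) := by
    rw [Metric.tendsto_nhds_nhds]
    intro ε hε
    set ε' : ℝ := min ε 1 / 2 with hε'def
    have hε'pos : 0 < ε' := by positivity
    have hε'lt1 : ε' < 1 := by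
      have : min ε 1 ≤ 1 := min_le_right _ _
      rw [hε'def]; linarith
    have hε'ltε : ε' < ε := by
      have : min ε 1 ≤ ε := min_le_left _ _
      rw [hε'def]; linarith
    -- upper bound
    have hq : l0 + ε' • e ∈ interior D := by
      have hcombo := hDconv.combo_self_interior_mem_interior hl0D heInt
        (a := 1 - ε') (b := ε') (by linarith) hε'pos (by ring)
      have h : (1 - ε') • l0 + ε' • (l0 + e) = l0 + ε' • e := by module
      rwa [h] at hcombo
    obtain ⟨δ₂, hδ₂pos, hδ₂⟩ : ∃ δ > 0, Metric.ball (l0 + ε' • e) δ ⊆ D :=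
      Metric.mem_nhds_iff.mp (mem_of_superset (isOpen_interior.mem_nhds hq) interior_subset)
    -- lower bound
    obtain ⟨δ₃, hδ₃pos, hδ₃⟩ : ∃ δ > 0, ∀ t ∈ Set.Icc (-M) (-ε'), ∀ y : Fin n → ℝ,
        ‖y‖ < δ → A y t ∉ D := by
      set φ : ℝ → ℝ := fun t => Metric.infDist (l0 + t • e) D with hφ
      have hφcont : Continuous φ := by
        apply (Metric.continuous_infDist_pt D).comp
        exact continuous_const.add (continuous_id.smul continuous_const)
      have hφpos : ∀ t ∈ Set.Icc (-M) (-ε'), 0 < φ t := by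
        intro t ht
        rw [hφ]
        rw [← hDclosed.notMem_iff_infDist_pos ⟨l0, hl0D⟩]
        exact hneg t (lt_of_le_of_lt ht.2 (by linarith))
      have hIne : (Set.Icc (-M) (-ε')).Nonempty := by
        refine ⟨-M, ?_⟩
        rw [Set.mem_Icc]
        constructor <;> linarith
      obtain ⟨ts, htsmem, htsmin⟩ := isCompact_Icc.exists_isMinOn hIne hφcont.continuousOn
      refine ⟨φ ts, hφpos ts htsmem, ?_⟩
      intro t ht y hy hmem
      have h1 : φ t ≤ dist (l0 + t • e) (A y t) := by
        rw [hφ]; exact Metric.infDist_le_dist_of_mem hmem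
      have h2 : dist (l0 + t • e) (A y t) = ‖y‖ := by
        rw [dist_eq_norm]
        have h : l0 + t • e - A y t = -y := by simp only [hA]; module
        rw [h, norm_neg]
      have h3 : φ ts ≤ φ t := htsmin ht
      rw [h2] at h1
      have := hφpos ts htsmem
      linarith
    refine ⟨min δ₁ (min δ₂ δ₃), by positivity, ?_⟩
    intro y hy
    rw [dist_zero_right] at hy
    have hy1 : ‖y‖ < δ₁ := lt_of_lt_of_le hy (min_le_left _ _)
    have hy2 : ‖y‖ < δ₂ := lt_of_lt_of_le hy (le_trans (min_le_right _ _) (min_le_left _ _))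
    have hy3 : ‖y‖ < δ₃ := lt_of_lt_of_le hy (le_trans (min_le_right _ _) (min_le_right _ _))
    have hup : f y ≤ ε' := by
      apply csInf_le (hbddS y hy1.le)
      show A y ε' ∈ D
      apply hδ₂
      rw [Metric.mem_ball, dist_eq_norm]
      have h : A y ε' - (l0 + ε' • e) = y := by simp only [hA]; module
      rw [h]; exact hy2
    have hlow : -ε' < f y := by
      by_contra h
      push_neg at h
      exact hδ₃ (f y) ⟨hfgeM y hy1, h⟩ y hy3 (hfmem y hy1)
    rw [Real.dist_eq, sub_zero, abs_lt]
    constructor <;> linarith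
  -- boundary point is on the frontier
  have hfront : ∀ y : Fin n → ℝ, ‖y‖ < δ₁ → A y (f y) ∈ frontier D := by
    intro y hy
    refine ⟨subset_closure (hfmem y hy), ?_⟩
    intro hint
    obtain ⟨η, hηpos, hη⟩ : ∃ δ > 0, Metric.ball (A y (f y)) δ ⊆ D :=
      Metric.mem_nhds_iff.mp (mem_interior_iff_mem_nhds.mp hint)
    set c : ℝ := η / (2 * ‖e‖) with hc
    have hcpos : 0 < c := by positivity
    have hmem : (f y - c) ∈ S y := by
      show A y (f y - c) ∈ D
      apply hη
      rw [Metric.mem_ball, dist_eq_norm]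
      have h : A y (f y - c) - A y (f y) = (-c) • e := by simp only [hA]; module
      rw [h, norm_smul, Real.norm_eq_abs, abs_neg, abs_of_pos hcpos, hc]
      have h2 : η / (2 * ‖e‖) * ‖e‖ = η / 2 := by field_simp
      rw [h2]
      linarith
    have := csInf_le (hbddS y hy.le) hmem
    have : f y ≤ f y - c := this
    linarith
    -- polynomial vanishes along the section
  have hPzero : ∀ y : Fin n → ℝ, ‖y‖ < δ₁ → eval (A y (f y)) p = 0 :=
    fun y hy => hp0 _ (hfront y hy)
  have hpl0 : eval l0 p = 0 := hp0 l0 hl0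
  -- the linear functional given by the gradient
  set Lg : (Fin n → ℝ) →L[ℝ] ℝ := ∑ i, g i • (ContinuousLinearMap.proj i) with hLgdef
  have hLgapp : ∀ v : Fin n → ℝ, Lg v = dot g v := by
    intro v
    simp [hLgdef, dot, ContinuousLinearMap.sum_apply]
  have hPd : HasFDerivAt (fun x : Fin n → ℝ => eval x p) Lg l0 := hasFDerivAt_mvpoly p l0
  set T : ((Fin n → ℝ) × ℝ) →L[ℝ] (Fin n → ℝ) :=
    (ContinuousLinearMap.fst ℝ (Fin n → ℝ) ℝ) +
      (ContinuousLinearMap.snd ℝ (Fin n → ℝ) ℝ).smulRight e with hTdef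
  have hTapp : ∀ w : (Fin n → ℝ) × ℝ, T w = w.1 + w.2 • e := by
    intro w; simp [hTdef]
  set G : ((Fin n → ℝ) × ℝ) → ℝ := fun w => eval (l0 + T w) p with hGdef
  have hGd : HasFDerivAt G (Lg.comp T) ((0 : Fin n → ℝ), (0:ℝ)) := by
    have h1 : HasFDerivAt (fun w : (Fin n → ℝ) × ℝ => l0 + T w) T ((0 : Fin n → ℝ), (0:ℝ)) :=
      T.hasFDerivAt.const_add l0
    have h2 : HasFDerivAt (fun x : Fin n → ℝ => eval x p) Lg
        ((fun w : (Fin n → ℝ) × ℝ => l0 + T w) ((0 : Fin n → ℝ), (0:ℝ))) := by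
      have he : (fun w : (Fin n → ℝ) × ℝ => l0 + T w) ((0 : Fin n → ℝ), (0:ℝ)) = l0 := by
        simp only [hTapp]; simp
      rw [he]; exact hPd
    have h3 : HasFDerivAt ((fun x : Fin n → ℝ => eval x p) ∘
        (fun w : (Fin n → ℝ) × ℝ => l0 + T w)) (Lg.comp T) ((0 : Fin n → ℝ), (0:ℝ)) :=
      HasFDerivAt.comp (f := fun w : (Fin n → ℝ) × ℝ => l0 + T w)
        ((0 : Fin n → ℝ), (0:ℝ)) h2 h1
    exact h3
  have hG00 : G ((0 : Fin n → ℝ), (0:ℝ)) = 0 := by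
    have he : l0 + T ((0 : Fin n → ℝ), (0:ℝ)) = l0 := by rw [hTapp]; simp
    rw [hGdef]
    simp only
    rw [he]
    exact hpl0
  have ho1 : (fun w : (Fin n → ℝ) × ℝ => G w - (Lg.comp T) w)
      =o[nhds 0] (fun w : (Fin n → ℝ) × ℝ => w) := by
    have h := hasFDerivAt_iff_isLittleO_nhds_zero.mp hGd
    have hzz : ((0 : Fin n → ℝ), (0:ℝ)) = (0 : (Fin n → ℝ) × ℝ) := rfl
    rw [hzz] at h hG00
    simpa [hG00] using h
  set mm : (Fin n → ℝ) → (Fin n → ℝ) × ℝ := fun y => (y, f y) with hmm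
  have hmt : Tendsto mm (nhds 0) (nhds 0) := by
    have h : Tendsto mm (nhds 0) (nhds ((0 : Fin n → ℝ), (0:ℝ))) :=
      Tendsto.prodMk_nhds tendsto_id hfcont
    exact h
  have ho2 : (fun y => G (mm y) - (Lg.comp T) (mm y)) =o[nhds 0] (fun y => mm y) :=
    ho1.comp_tendsto hmt
  have hGm0 : ∀ᶠ y : (Fin n → ℝ) in nhds 0, G (mm y) = 0 := by
    filter_upwards [Metric.ball_mem_nhds (0 : Fin n → ℝ) hδ₁pos] with y hy
    rw [Metric.mem_ball, dist_zero_right] at hy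
    have h1 : l0 + T (mm y) = A y (f y) := by
      rw [hTapp]
      simp only [hmm, hA]
      module
    rw [hGdef]
    simp only
    rw [h1]
    exact hPzero y hy
  have ho3 : (fun y => (Lg.comp T) (mm y)) =o[nhds 0] (fun y => mm y) := by
    have hneg' := ho2.neg_left
    refine hneg'.congr' ?_ (Filter.EventuallyEq.refl _ _)
    filter_upwards [hGm0] with y hy
    rw [hy]
    ring
  have hLT : ∀ y : Fin n → ℝ, (Lg.comp T) (mm y) = dot g y + f y * b := by
    intro y
    rw [ContinuousLinearMap.comp_apply, hTapp]
    simp only [hmm]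
    rw [show ((y, f y) : (Fin n → ℝ) × ℝ).1 + ((y, f y) : (Fin n → ℝ) × ℝ).2 • e
      = y + f y • e from rfl]
    rw [hLgapp, dot_add_right, dot_smul_right, hbdef]
    try ring
  have hmO : (fun y => mm y) =O[nhds 0] (fun y : Fin n → ℝ => y) := by
    rw [Asymptotics.isBigO_iff]
    refine ⟨2 * ‖Lg‖ / |b| + 1, ?_⟩
    have hsmall := ho3.def (half_pos habs)
    filter_upwards [hsmall] with y hy
    have h1 : ‖mm y‖ = max ‖y‖ |f y| := by
      rw [hmm, Prod.norm_def]
      simp [Real.norm_eq_abs]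
    have h2 : |dot g y + f y * b| ≤ |b| / 2 * max ‖y‖ |f y| := by
      rw [← hLT y, ← Real.norm_eq_abs, ← h1]
      simpa [Real.norm_eq_abs] using hy
    have h3 : |dot g y| ≤ ‖Lg‖ * ‖y‖ := by
      rw [← hLgapp, ← Real.norm_eq_abs]
      exact Lg.le_opNorm y
    have h4 : max ‖y‖ |f y| ≤ ‖y‖ + |f y| :=
      max_le (by linarith [abs_nonneg (f y)]) (by linarith [norm_nonneg y])
    have h5 : |f y * b| ≤ |dot g y + f y * b| + |dot g y| := by
      calc |f y * b| = |(dot g y + f y * b) + (-(dot g y))| := by ring_nf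
        _ ≤ |dot g y + f y * b| + |(-(dot g y))| := abs_add_le _ _
        _ = |dot g y + f y * b| + |dot g y| := by rw [abs_neg]
    have h6 : |f y| * |b| ≤ ‖Lg‖ * ‖y‖ + |b| / 2 * (‖y‖ + |f y|) := by
      rw [← abs_mul]
      have h7 : |b| / 2 * max ‖y‖ |f y| ≤ |b| / 2 * (‖y‖ + |f y|) :=
        mul_le_mul_of_nonneg_left h4 (by positivity)
      linarith
    have h8 : |f y| * |b| ≤ (2 * ‖Lg‖ + |b|) * ‖y‖ := by nlinarith
    have hc : (2 * ‖Lg‖ / |b| + 1) * |b| = 2 * ‖Lg‖ + |b| := by field_simp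
    have h9 : |f y| ≤ (2 * ‖Lg‖ / |b| + 1) * ‖y‖ := by
      rw [← mul_le_mul_iff_of_pos_right habs, mul_right_comm, hc]
      exact h8
    rw [h1]
    apply max_le
    · have hpos : (0:ℝ) ≤ 2 * ‖Lg‖ / |b| := by positivity
      nlinarith [norm_nonneg y]
    · exact h9
  have ho4 : (fun y => (Lg.comp T) (mm y)) =o[nhds 0] (fun y : Fin n → ℝ => y) :=
    ho3.trans_isBigO hmO
  set f' : (Fin n → ℝ) →L[ℝ] ℝ := (-b⁻¹) • Lg with hf'def
  have hfd : HasFDerivAt f f' 0 := by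
    rw [hasFDerivAt_iff_isLittleO_nhds_zero]
    have heq : (fun h : Fin n → ℝ => f (0 + h) - f 0 - f' h)
        = fun y => b⁻¹ * ((Lg.comp T) (mm y)) := by
      funext y
      rw [zero_add, hf0, hLT y]
      simp only [hf'def, ContinuousLinearMap.smul_apply, smul_eq_mul]
      rw [hLgapp]
      field_simp
      ring
    rw [heq]
    exact ho4.const_mul_left _
  -- every point of the face equals a fixed multiple of the gradient
  have hkey : ∀ x : Fin n → ℝ, x ∈ C → dot l0 x = -1 → x = (dot e x / b) • g := by
    intro x hxC hx1
    set s : ℝ := dot e x with hsdef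
    set Lx : (Fin n → ℝ) →L[ℝ] ℝ := ∑ i, x i • (ContinuousLinearMap.proj i) with hLxdef
    have hLxapp : ∀ v : Fin n → ℝ, Lx v = dot x v := by
      intro v
      simp [hLxdef, dot, ContinuousLinearMap.sum_apply]
    set ψ : (Fin n → ℝ) → ℝ := fun y => (dot l0 x + Lx y) + f y * s with hψdef
    have hψA : ∀ y : Fin n → ℝ, ψ y = dot (A y (f y)) x := by
      intro y
      rw [hψdef]
      simp only [hA]
      rw [dot_add_left, dot_add_left, dot_smul_left, hLxapp, dot_comm x y, hsdef, dot_comm e x]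
      try ring
    have hmin : IsLocalMin ψ 0 := by
      have hψ0 : ψ 0 = -1 := by
        rw [hψA 0]
        have hA00 : A 0 (f 0) = l0 := by rw [hf0]; simp only [hA]; module
        rw [hA00, hx1]
      have hev : ∀ᶠ y : Fin n → ℝ in nhds 0, ψ 0 ≤ ψ y := by
        filter_upwards [Metric.ball_mem_nhds (0 : Fin n → ℝ) hδ₁pos] with y hy
        rw [Metric.mem_ball, dist_zero_right] at hy
        rw [hψ0, hψA y]
        exact (hfmem y hy) x hxC
      exact hev
    have hψd : HasFDerivAt ψ (Lx + s • f') 0 := by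
      have h1 : HasFDerivAt (fun y : Fin n → ℝ => dot l0 x + Lx y) Lx 0 :=
        Lx.hasFDerivAt.const_add _
      have h2 : HasFDerivAt (fun y : Fin n → ℝ => f y * s) (s • f') 0 := hfd.mul_const s
      exact h1.add h2
    have hzero : Lx + s • f' = 0 := hmin.hasFDerivAt_eq_zero hψd
    funext i
    have hi := ContinuousLinearMap.ext_iff.mp hzero (Pi.single i 1)
    simp only [ContinuousLinearMap.add_apply, ContinuousLinearMap.smul_apply,
      ContinuousLinearMap.zero_apply, hf'def, smul_eq_mul] at hi
    have e1 : Lx (Pi.single i 1) = x i := by rw [hLxapp, dot_single_right, mul_one]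
    have e2 : Lg (Pi.single i 1) = g i := by rw [hLgapp, dot_single_right, mul_one]
    rw [e1, e2] at hi
    show x i = (s / b) * g i
    linear_combination hi
  -- conclusion
  have hxbkey := hkey xb hxbC hxb1
  have hβne : dot l0 g ≠ 0 := by
    intro hβ
    have h1 : dot l0 xb = (dot e xb / b) * dot l0 g := by
      conv_lhs => rw [hxbkey]
      rw [dot_smul_right]
    rw [hxb1, hβ, mul_zero] at h1
    norm_num at h1
  set x₀ : Fin n → ℝ := (-(dot l0 g)⁻¹) • g with hx₀def
  have hall : ∀ x : Fin n → ℝ, x ∈ C → dot l0 x = -1 → x = x₀ := by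
    intro x hxC hx1
    have h1 := hkey x hxC hx1
    have h3 : dot l0 x = (dot e x / b) * dot l0 g := by
      conv_lhs => rw [h1]
      rw [dot_smul_right]
    have h2 : (dot e x / b) * dot l0 g = -1 := by rw [← h3, hx1]
    have h4 : dot e x / b = -(dot l0 g)⁻¹ := by
      field_simp at h2 ⊢
      linarith
    rw [h1, h4, hx₀def]
  have hxb0 : xb = x₀ := hall xb hxbC hxb1
  refine ⟨x₀, ?_, ?_⟩
  · ext x
    simp only [Set.mem_setOf_eq, Set.mem_singleton_iff]
    constructor
    · rintro ⟨hxC, hx1⟩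
      exact hall x hxC hx1
    · rintro rfl
      rw [← hxb0]
      exact ⟨hxbC, hxb1⟩
  · rw [mem_extremePoints]
    refine ⟨hxb0 ▸ hxbC, ?_⟩
    intro x₁ hx₁ x₂ hx₂ hseg
    obtain ⟨a, b', ha, hb', hab, hsum⟩ := hseg
    have h₁ : -1 ≤ dot l0 x₁ := hl0D x₁ hx₁
    have h₂ : -1 ≤ dot l0 x₂ := hl0D x₂ hx₂
    have e0 : dot l0 x₀ = -1 := by rw [← hxb0]; exact hxb1
    have hdot : a * dot l0 x₁ + b' * dot l0 x₂ = -1 := by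
      rw [← e0, ← hsum, dot_add_right, dot_smul_right, dot_smul_right]
    have he₁ : dot l0 x₁ = -1 := by
      by_contra hne
      have hgt : -1 < dot l0 x₁ := lt_of_le_of_ne h₁ (Ne.symm hne)
      nlinarith [mul_nonneg hb'.le (by linarith : (0:ℝ) ≤ dot l0 x₂ + 1),
        mul_pos ha (by linarith : (0:ℝ) < dot l0 x₁ + 1)]
    have he₂ : dot l0 x₂ = -1 := by
      by_contra hne
      have hgt : -1 < dot l0 x₂ := lt_of_le_of_ne h₂ (Ne.symm hne)
      nlinarith [mul_nonneg ha.le (by linarith : (0:ℝ) ≤ dot l0 x₁ + 1),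
        mul_pos hb' (by linarith : (0:ℝ) < dot l0 x₂ + 1)]
    exact ⟨hall x₁ hx₁ he₁, hall x₂ hx₂ he₂⟩
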